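/- Soundness of DmbC with respect to swap Kripke models: for every set of formulas Γ ∪ {φ} ⊆ For(Σ), if Γ ⊢_DmbC φ then Γ ⊨_DmbC φ. -/
import Mathlib


/-- Formulas over the signature Σ = {∧, ∨, →, ¬, ∘, O}, with countably many
propositional variables. -/
inductive Form : Type
  | var : ℕ → Form
  | and : Form → Form → Form
  | or : Form → Form → Form
  | imp : Form → Form → Form
  | neg : Form → Form
  | circ : Form → Form
  | obl : Form → Form

namespace Form
/-- ⊥_α := (α ∧ ¬α) ∧ ∘α -/
def bot (α : Form) : Form := (α.and α.neg).and α.circ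
end Form

/-- Theorems of the Hilbert calculus DmbC: CPL⁺ axioms, (EM), (bc), (O-K), (O-E),
with rules Modus Ponens and O-necessitation. -/
inductive ThmDmbC : Form → Prop
  | A1 (α β : Form) : ThmDmbC (α.imp (β.imp α))
  | A2 (α β γ : Form) : ThmDmbC ((α.imp (β.imp γ)).imp ((α.imp β).imp (α.imp γ)))
  | A3 (α β : Form) : ThmDmbC (α.imp (β.imp (α.and β)))
  | A4 (α β : Form) : ThmDmbC ((α.and β).imp α)
  | A5 (α β : Form) : ThmDmbC ((α.and β).imp β)
  | A6 (α β : Form) : ThmDmbC (α.imp (α.or β))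
  | A7 (α β : Form) : ThmDmbC (β.imp (α.or β))
  | A8 (α β γ : Form) : ThmDmbC ((α.imp γ).imp ((β.imp γ).imp ((α.or β).imp γ)))
  | A9 (α β : Form) : ThmDmbC (((α.imp β).imp α).imp α)
  | EM (α : Form) : ThmDmbC (α.or α.neg)
  | bc (α β : Form) : ThmDmbC (α.circ.imp (α.imp (α.neg.imp β)))
  | OK (α β : Form) : ThmDmbC ((α.imp β).obl.imp (α.obl.imp β.obl))
  | OE (α : Form) : ThmDmbC (α.bot.obl.imp α.bot)
  | mp {α β : Form} : ThmDmbC (α.imp β) → ThmDmbC α → ThmDmbC β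
  | nec {α : Form} : ThmDmbC α → ThmDmbC α.obl

/-- conj γ [γ₂,…,γ_k] = γ ∧ γ₂ ∧ … ∧ γ_k -/
def conj (γ : Form) : List Form → Form
  | [] => γ
  | δ :: l => γ.and (conj δ l)

/-- Γ ⊢_DmbC φ iff ⊢ φ or ⊢ (γ₁ ∧ … ∧ γ_k) → φ for some γ₁,…,γ_k ∈ Γ, k ≥ 1. -/
def DerivDmbC (Γ : Set Form) (φ : Form) : Prop :=
  ThmDmbC φ ∨ ∃ (γ : Form) (l : List Form),
    (∀ δ ∈ γ :: l, δ ∈ Γ) ∧ ThmDmbC ((conj γ l).imp φ)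

/-- The three snapshots T = (1,0), t = (1,1), F = (0,1). -/
inductive SV : Type
  | T | t | F
deriving DecidableEq

/-- First coordinate of a snapshot. -/
def SV.p1 : SV → Bool
  | .T => true | .t => true | .F => false

/-- Second coordinate of a snapshot. -/
def SV.p2 : SV → Bool
  | .T => false | .t => true | .F => true

/-- Designated values: D = {T, t}, i.e. first coordinate is 1. -/
def SV.desig (a : SV) : Prop := a.p1 = true

/-- Swap Kripke model conditions for DmbC on a serial frame (W,R) with
valuations v_w : Form → SV. -/
structure IsModelDmbC {W : Type} (R : W → W → Prop) (v : W → Form → SV) : Prop where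
  serial : ∀ w, ∃ w', R w w'
  and_ : ∀ w α β, (v w (α.and β)).p1 = ((v w α).p1 && (v w β).p1)
  or_ : ∀ w α β, (v w (α.or β)).p1 = ((v w α).p1 || (v w β).p1)
  imp_ : ∀ w α β, (v w (α.imp β)).p1 = (!(v w α).p1 || (v w β).p1)
  neg_ : ∀ w α, (v w α.neg).p1 = (v w α).p2
  circ_ : ∀ w α, (v w α.circ).p1 ≤ !((v w α).p1 && (v w α).p2)
  obl_ : ∀ w α, ((v w α.obl).p1 = true ↔ ∀ w', R w w' → (v w' α).p1 = true)

/-- Γ ⊨_DmbC φ : semantic consequence over all swap Kripke models for DmbC. -/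
def SemDmbC (Γ : Set Form) (φ : Form) : Prop :=
  ∀ (W : Type) (R : W → W → Prop) (v : W → Form → SV), Nonempty W →
    IsModelDmbC R v → ∀ w : W, (∀ γ ∈ Γ, (v w γ).desig) → (v w φ).desig

lemma bool_le_elim {x y : Bool} (h : x ≤ y) (hx : x = true) : y = true := by
  subst hx; cases y
  · exact absurd h (by decide)
  · rfl

lemma SV.p1_or_p2 (a : SV) : (a.p1 || a.p2) = true := by cases a <;> rfl

lemma bot_false {W : Type} {R : W → W → Prop} {v : W → Form → SV}
    (h : IsModelDmbC R v) (w : W) (α : Form) : (v w α.bot).p1 = false := by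
  have hb : (v w α.bot).p1 = (((v w α).p1 && (v w α).p2) && (v w α.circ).p1) := by
    simp [Form.bot, h.and_, h.neg_]
  have hc := h.circ_ w α
  cases h3 : (v w α.circ).p1
  · simp [hb, h3]
  · have := bool_le_elim hc h3
    rw [hb]
    cases h1 : (v w α).p1 <;> cases h2 : (v w α).p2 <;> simp_all

lemma thm_valid {W : Type} {R : W → W → Prop} {v : W → Form → SV}
    (h : IsModelDmbC R v) {φ : Form} (hφ : ThmDmbC φ) : ∀ w, (v w φ).p1 = true := by
  induction hφ with
  | A1 α β => intro w; simp [h.imp_]; cases (v w α).p1 <;> cases (v w β).p1 <;> simp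
  | A2 α β γ => intro w; simp [h.imp_]
                cases (v w α).p1 <;> cases (v w β).p1 <;> cases (v w γ).p1 <;> simp
  | A3 α β => intro w; simp [h.imp_, h.and_]
              cases (v w α).p1 <;> cases (v w β).p1 <;> simp
  | A4 α β => intro w; simp [h.imp_, h.and_]
              cases (v w α).p1 <;> cases (v w β).p1 <;> simp
  | A5 α β => intro w; simp [h.imp_, h.and_]
              cases (v w α).p1 <;> cases (v w β).p1 <;> simp
  | A6 α β => intro w; simp [h.imp_, h.or_]
              cases (v w α).p1 <;> cases (v w β).p1 <;> simp
  | A7 α β => intro w; simp [h.imp_, h.or_]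
              cases (v w α).p1 <;> cases (v w β).p1 <;> simp
  | A8 α β γ => intro w; simp [h.imp_, h.or_]
                cases (v w α).p1 <;> cases (v w β).p1 <;> cases (v w γ).p1 <;> simp
  | A9 α β => intro w; simp [h.imp_]; cases (v w α).p1 <;> cases (v w β).p1 <;> simp
  | EM α => intro w
            have := SV.p1_or_p2 (v w α)
            simp [h.or_, h.neg_, this]
  | bc α β => intro w
              have hc := h.circ_ w α
              simp [h.imp_, h.neg_]
              cases h3 : (v w α.circ).p1
              · simp
              · have := bool_le_elim hc h3
                cases h1 : (v w α).p1 <;> cases h2 : (v w α).p2 <;> simp_all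
  | OK α β => intro w
              simp [h.imp_]
              cases hk : (v w (α.imp β).obl).p1
              · simp
              · cases ha : (v w α.obl).p1
                · simp
                · have hk' := (h.obl_ w (α.imp β)).mp hk
                  have ha' := (h.obl_ w α).mp ha
                  have hb : (v w β.obl).p1 = true := by
                    refine (h.obl_ w β).mpr (fun w' hw' => ?_)
                    have h1 := hk' w' hw'
                    have h2 := ha' w' hw'
                    have h3 := h.imp_ w' α β
                    rw [h1, h2] at h3
                    simpa using h3.symm
                  simp [hb]
  | OE α => intro w
            have hb : (v w α.bot.obl).p1 = false := by
              obtain ⟨w', hw'⟩ := h.serial w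
              cases hk : (v w α.bot.obl).p1
              · rfl
              · have := (h.obl_ w α.bot).mp hk w' hw'
                rw [bot_false h w' α] at this
                exact absurd this (by simp)
            simp [h.imp_, hb]
  | @mp α β hab ha ihab iha =>
      intro w
      have := h.imp_ w α β
      rw [ihab w, iha w] at this
      simpa using this.symm
  | nec ha iha => intro w
                  exact (h.obl_ w _).mpr (fun w' _ => iha w')

lemma conj_true {W : Type} {R : W → W → Prop} {v : W → Form → SV}
    (h : IsModelDmbC R v) (w : W) :
    ∀ (l : List Form) (γ : Form), (v w γ).p1 = true → (∀ δ ∈ l, (v w δ).p1 = true) →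
      (v w (conj γ l)).p1 = true := by
  intro l
  induction l with
  | nil => intro γ hγ _; exact hγ
  | cons δ l ih =>
      intro γ hγ hl
      have := h.and_ w γ (conj δ l)
      rw [show Form.and γ (conj δ l) = conj γ (δ :: l) from rfl] at this
      rw [this, hγ, ih δ (hl δ (by simp)) (fun x hx => hl x (by simp [hx]))]
      rfl

/-- Soundness of DmbC w.r.t. swap Kripke models. -/
theorem DmbC_soundness (Γ : Set Form) (φ : Form) :
    DerivDmbC Γ φ → SemDmbC Γ φ := by
  intro hd W R v hW hM w hΓ
  rcases hd with hthm | ⟨γ, l, hmem, hthm⟩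
  · exact thm_valid hM hthm w
  · have hconj : (v w (conj γ l)).p1 = true :=
      conj_true hM w l γ (hΓ γ (hmem γ (by simp)))
        (fun δ hδ => hΓ δ (hmem δ (by simp [hδ])))
    have hi := hM.imp_ w (conj γ l) φ
    rw [thm_valid hM hthm w, hconj] at hi
    simpa [SV.desig] using hi.symm
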